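/- Splitting an Euler tour is valid: let E be an Euler tour of a tree T rooted at r, and let (x,y) be a tree edge with x an ancestor of y. Then the contiguous subsequence of E from the first occurrence f(y) to the last occurrence l(y) of y is an Euler tour of the subtree of T rooted at y, and deleting this subsequence together with the two adjacent occurrences of x (at positions f(y)−1 and l(y)+1) from E yields an Euler tour of T with the subtree of y removed. -/

import Mathlib

/-- Rooted trees with vertices labelled by `V`. -/
inductive RTree (V : Type*) where
  | node : V → List (RTree V) → RTree V

namespace RTree

variable {V : Type*}

/-- The root label of a rooted tree. -/
def root : RTree V → V
  | node v _ => v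

/-- The list of all vertex labels of a rooted tree. -/
def verts : RTree V → List V
  | node v cs => v :: cs.attach.flatMap (fun c => verts c.1)
  decreasing_by
    have := List.sizeOf_lt_of_mem c.2
    simp only [RTree.node.sizeOf_spec]
    omega

/-- The Euler tour of a rooted tree, recorded as the sequence of vertex occurrences in
which each traversal of an edge records both of its endpoints: entering a node records
it, and each traversal of an edge `(w, c)` records `w` when leaving `w` and records `w`
again when returning to it (the subtree of each child is enclosed between two
occurrences of the parent). -/
def etour : RTree V → List V
  | node v cs => [v] ++ cs.attach.flatMap (fun c => [v] ++ etour c.1 ++ [v]) ++ [v]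
  decreasing_by
    have := List.sizeOf_lt_of_mem c.2
    simp only [RTree.node.sizeOf_spec]
    omega

/-- Remove from `t` every child subtree whose root is `y`. -/
def remove [DecidableEq V] : RTree V → V → RTree V
  | node w cs, y =>
      node w (cs.attach.filterMap
        (fun c => if c.1.root = y then none else some (remove c.1 y)))
  decreasing_by
    have := List.sizeOf_lt_of_mem c.2
    simp only [RTree.node.sizeOf_spec]
    omega

/-- `ChildOf t x s`: somewhere in `t` there is a node labelled `x` having `s` as one of
its child subtrees; i.e. `(x, root s)` is a tree edge with `x` the parent of `root s`,
and `s` is the subtree rooted at `root s`. -/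
inductive ChildOf : RTree V → V → RTree V → Prop
  | base {w : V} {cs : List (RTree V)} {s : RTree V} :
      s ∈ cs → ChildOf (node w cs) w s
  | step {w : V} {cs : List (RTree V)} {c : RTree V} {x : V} {s : RTree V} :
      c ∈ cs → ChildOf c x s → ChildOf (node w cs) x s

theorem verts_node (v : V) (cs : List (RTree V)) :
    (node v cs).verts = v :: cs.flatMap verts := by
  rw [verts]
  conv_rhs => rw [← List.attach_map_subtype_val cs, List.flatMap_map]

theorem etour_node (v : V) (cs : List (RTree V)) :
    (node v cs).etour = [v] ++ cs.flatMap (fun c => [v] ++ c.etour ++ [v]) ++ [v] := by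
  rw [etour]
  conv_rhs => rw [← List.attach_map_subtype_val cs, List.flatMap_map]

theorem remove_node [DecidableEq V] (w y : V) (cs : List (RTree V)) :
    (node w cs).remove y = node w (cs.filterMap
      (fun c => if c.root = y then none else some (c.remove y))) := by
  rw [remove]
  congr 1
  conv_rhs => rw [← List.attach_map_subtype_val cs, List.filterMap_map]
  rfl

theorem root_mem_verts (t : RTree V) : t.root ∈ t.verts := by
  cases t with
  | node v cs => rw [verts_node]; exact List.mem_cons_self

theorem mem_verts_of_mem_etour : ∀ (t : RTree V) (a : V), a ∈ t.etour → a ∈ t.verts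
  | node v cs, a, ha => by
    rw [etour_node] at ha
    rw [verts_node]
    simp only [List.mem_append, List.mem_flatMap, List.mem_cons, List.not_mem_nil, or_false] at ha ⊢
    rcases ha with (ha | ⟨c, hc, ha⟩) | ha
    · exact Or.inl ha
    · rcases ha with (ha | ha) | ha
      · exact Or.inl ha
      · exact Or.inr ⟨c, hc, mem_verts_of_mem_etour c a ha⟩
      · exact Or.inl ha
    · exact Or.inl ha
  decreasing_by
    have := List.sizeOf_lt_of_mem hc
    simp only [RTree.node.sizeOf_spec]
    omega

theorem remove_eq_self [DecidableEq V] : ∀ (t : RTree V) (y : V), y ∉ t.verts → t.remove y = t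
  | node w cs, y, hy => by
    rw [verts_node] at hy
    rw [remove_node]
    congr 1
    have h1 : ∀ c ∈ cs, (if c.root = y then none else some (c.remove y)) = some c := by
      intro c hc
      have hyc : y ∉ c.verts := by
        intro h
        exact hy (List.mem_cons_of_mem _ (List.mem_flatMap.2 ⟨c, hc, h⟩))
      have hr : c.root ≠ y := by
        intro h
        exact hyc (h ▸ root_mem_verts c)
      rw [if_neg hr, remove_eq_self c y hyc]
    rw [List.filterMap_congr h1, List.filterMap_some]
  decreasing_by
    have := List.sizeOf_lt_of_mem hc
    simp only [RTree.node.sizeOf_spec]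
    omega

theorem verts_subset_of_childOf {t : RTree V} {x : V} {s : RTree V}
    (hc : ChildOf t x s) : ∀ a ∈ s.verts, a ∈ t.verts := by
  induction hc with
  | base hmem =>
    intro a ha
    rw [verts_node]
    exact List.mem_cons_of_mem _ (List.mem_flatMap.2 ⟨_, hmem, ha⟩)
  | step hmem hcs ih =>
    intro a ha
    rw [verts_node]
    exact List.mem_cons_of_mem _ (List.mem_flatMap.2 ⟨_, hmem, ih a ha⟩)

theorem mem_flat_of_childOf {u : V} {ds : List (RTree V)} {x : V} {s : RTree V}
    (hc : ChildOf (node u ds) x s) : ∀ a ∈ s.verts, a ∈ ds.flatMap verts := by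
  cases hc with
  | base hmem => exact fun a ha => List.mem_flatMap.2 ⟨_, hmem, ha⟩
  | step hmem hcs =>
    exact fun a ha => List.mem_flatMap.2 ⟨_, hmem, verts_subset_of_childOf hcs a ha⟩


end RTree

namespace RTree
variable {V : Type*}

theorem some_of_not_mem_verts [DecidableEq V] {y : V} {c : RTree V} (h : y ∉ c.verts) :
    (if c.root = y then none else some (c.remove y)) = some c := by
  have hr : c.root ≠ y := fun he => h (he ▸ root_mem_verts c)
  rw [if_neg hr, remove_eq_self c y h]

theorem key [DecidableEq V] {t : RTree V} {x y : V} {s : RTree V}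
    (hc : ChildOf t x s) :
    t.verts.Nodup → s.root = y →
    x ≠ y ∧ ∃ A B : List V,
      t.etour = A ++ [x] ++ s.etour ++ [x] ++ B ∧ y ∉ A ∧ y ∉ B ∧
      (t.remove y).etour = A ++ B := by
  induction hc with
  | @base w cs s hmem =>
    intro hnd hy
    rw [verts_node, List.nodup_cons] at hnd
    obtain ⟨hw, hflat⟩ := hnd
    obtain ⟨cs1, cs2, rfl⟩ := List.append_of_mem hmem
    have hys : y ∈ s.verts := hy ▸ root_mem_verts s
    have hflat' : cs1.flatMap verts ++ (s.verts ++ cs2.flatMap verts)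
        = (cs1 ++ s :: cs2).flatMap verts := by simp
    rw [← hflat'] at hflat hw
    rw [List.nodup_append, List.nodup_append] at hflat
    obtain ⟨h1, ⟨hsnd, h2, hd2⟩, hd1⟩ := hflat
    have hwy : w ≠ y := fun he =>
      hw (List.mem_append.2 (Or.inr (List.mem_append.2 (Or.inl (he ▸ hys)))))
    refine ⟨hwy, w :: cs1.flatMap (fun c => [w] ++ c.etour ++ [w]),
      cs2.flatMap (fun c => [w] ++ c.etour ++ [w]) ++ [w], ?_, ?_, ?_, ?_⟩
    · rw [etour_node]; simp
    · intro hmemA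
      rcases List.mem_cons.1 hmemA with he | hmemA
      · exact hwy he.symm
      obtain ⟨c, hc1, hyc⟩ := List.mem_flatMap.1 hmemA
      simp only [List.mem_append, List.mem_singleton, List.mem_cons, List.not_mem_nil, or_false] at hyc
      rcases hyc with (he | hyc) | he
      · exact hwy he.symm
      · exact hd1 _ (List.mem_flatMap.2 ⟨c, hc1, mem_verts_of_mem_etour c y hyc⟩)
          _ (List.mem_append.2 (Or.inl hys)) rfl
      · exact hwy he.symm
    · intro hmemB
      rcases List.mem_append.1 hmemB with hmemB | he
      · obtain ⟨c, hc2, hyc⟩ := List.mem_flatMap.1 hmemB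
        simp only [List.mem_append, List.mem_singleton, List.mem_cons, List.not_mem_nil, or_false] at hyc
        rcases hyc with (he | hyc) | he
        · exact hwy he.symm
        · exact hd2 _ hys _ (List.mem_flatMap.2 ⟨c, hc2, mem_verts_of_mem_etour c y hyc⟩) rfl
        · exact hwy he.symm
      · exact hwy (List.mem_singleton.1 he).symm
    · rw [remove_node]
      have e1 : cs1.filterMap (fun c => if c.root = y then none else some (c.remove y)) = cs1 := by
        rw [List.filterMap_congr (fun c hc1 => some_of_not_mem_verts
          (fun hyc => hd1 _ (List.mem_flatMap.2 ⟨c, hc1, hyc⟩) _ (List.mem_append.2 (Or.inl hys)) rfl)),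
          List.filterMap_some]
      have e2 : cs2.filterMap (fun c => if c.root = y then none else some (c.remove y)) = cs2 := by
        rw [List.filterMap_congr (fun c hc2 => some_of_not_mem_verts
          (fun hyc => hd2 _ hys _ (List.mem_flatMap.2 ⟨c, hc2, hyc⟩) rfl)),
          List.filterMap_some]
      rw [List.filterMap_append, List.filterMap_cons, if_pos hy, e1, e2, etour_node]
      simp
  | @step w cs c x s hmem hcs ih =>
    intro hnd hy
    rw [verts_node, List.nodup_cons] at hnd
    obtain ⟨hw, hflat⟩ := hnd
    obtain ⟨cs1, cs2, rfl⟩ := List.append_of_mem hmem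
    have hys : y ∈ s.verts := hy ▸ root_mem_verts s
    have hyc : y ∈ c.verts := verts_subset_of_childOf hcs y hys
    have hflat' : cs1.flatMap verts ++ (c.verts ++ cs2.flatMap verts)
        = (cs1 ++ c :: cs2).flatMap verts := by simp
    rw [← hflat'] at hflat hw
    rw [List.nodup_append, List.nodup_append] at hflat
    obtain ⟨h1, ⟨hcnd, h2, hd2⟩, hd1⟩ := hflat
    obtain ⟨hxy, A, B, hE, hA, hB, hR⟩ := ih hcnd hy
    have hwy : w ≠ y := fun he =>
      hw (List.mem_append.2 (Or.inr (List.mem_append.2 (Or.inl (he ▸ hyc)))))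
    have hrc : c.root ≠ y := by
      cases c with
      | node u ds =>
        intro he
        have hue : u = y := he
        rw [verts_node, List.nodup_cons] at hcnd
        exact hcnd.1 (by rw [hue]; exact mem_flat_of_childOf hcs y hys)
    refine ⟨hxy, (w :: cs1.flatMap (fun c => [w] ++ c.etour ++ [w])) ++ [w] ++ A,
      B ++ [w] ++ cs2.flatMap (fun c => [w] ++ c.etour ++ [w]) ++ [w], ?_, ?_, ?_, ?_⟩
    · rw [etour_node]
      simp only [List.flatMap_append, List.flatMap_cons]
      rw [hE]
      simp
    · intro hmemA
      simp only [List.mem_append, List.mem_cons, List.mem_singleton, List.not_mem_nil, or_false] at hmemA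
      rcases hmemA with ((he | hmemA) | he) | hmemA
      · exact hwy he.symm
      · obtain ⟨d, hd1', hyd⟩ := List.mem_flatMap.1 hmemA
        simp only [List.mem_append, List.mem_singleton, List.mem_cons, List.not_mem_nil, or_false] at hyd
        rcases hyd with (he | hyd) | he
        · exact hwy he.symm
        · exact hd1 _ (List.mem_flatMap.2 ⟨d, hd1', mem_verts_of_mem_etour d y hyd⟩)
            _ (List.mem_append.2 (Or.inl hyc)) rfl
        · exact hwy he.symm
      · exact hwy he.symm
      · exact hA hmemA
    · intro hmemB
      simp only [List.mem_append, List.mem_singleton, List.mem_cons, List.not_mem_nil, or_false] at hmemB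
      rcases hmemB with ((hmemB | he) | hmemB) | he
      · exact hB hmemB
      · exact hwy he.symm
      · obtain ⟨d, hd2', hyd⟩ := List.mem_flatMap.1 hmemB
        simp only [List.mem_append, List.mem_singleton, List.mem_cons, List.not_mem_nil, or_false] at hyd
        rcases hyd with (he | hyd) | he
        · exact hwy he.symm
        · exact hd2 _ hyc _ (List.mem_flatMap.2 ⟨d, hd2', mem_verts_of_mem_etour d y hyd⟩) rfl
        · exact hwy he.symm
      · exact hwy he.symm
    · rw [remove_node]
      have e1 : cs1.filterMap (fun c => if c.root = y then none else some (c.remove y)) = cs1 := by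
        rw [List.filterMap_congr (fun d hd1' => some_of_not_mem_verts
          (fun hyd => hd1 _ (List.mem_flatMap.2 ⟨d, hd1', hyd⟩) _ (List.mem_append.2 (Or.inl hyc)) rfl)),
          List.filterMap_some]
      have e2 : cs2.filterMap (fun c => if c.root = y then none else some (c.remove y)) = cs2 := by
        rw [List.filterMap_congr (fun d hd2' => some_of_not_mem_verts
          (fun hyd => hd2 _ hyc _ (List.mem_flatMap.2 ⟨d, hd2', hyd⟩) rfl)),
          List.filterMap_some]
      rw [List.filterMap_append, List.filterMap_cons, if_neg hrc, e1, e2, etour_node]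
      simp only [List.flatMap_append, List.flatMap_cons]
      rw [hR]
      simp

end RTree

theorem indexOf_append_cons' {V : Type*} [DecidableEq V] {y : V} (P Q : List V) (h : y ∉ P) :
    (P ++ y :: Q).idxOf y = P.length := by
  induction P with
  | nil => simp
  | cons a P ih =>
    simp only [List.mem_cons, not_or] at h
    rw [List.cons_append, List.idxOf_cons_ne _ (fun he => h.1 he.symm), ih h.2]
    rfl

/-- Splitting an Euler tour is valid: let `E` be the Euler tour of a rooted tree `t`
with distinct vertex labels, and let `(x,y)` be a tree edge with `x` an ancestor
(the parent) of `y`, with `s` the subtree of `t` rooted at `y`.  Then the contiguous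
subsequence of `E` from the first occurrence `f(y)` to the last occurrence `l(y)` of `y`
is the Euler tour of the subtree rooted at `y`, the positions `f(y)−1` and `l(y)+1` hold
occurrences of `x`, and deleting this subsequence together with those two adjacent
occurrences of `x` from `E` yields the Euler tour of `t` with the subtree of `y`
removed. -/
theorem stmt12 {V : Type*} [DecidableEq V] (t s : RTree V) (x y : V)
    (hnd : t.verts.Nodup) (hc : RTree.ChildOf t x s) (hy : s.root = y) :
    let E := t.etour
    let f := E.idxOf y
    let l := E.length - 1 - E.reverse.idxOf y
    ((E.drop f).take (l - f + 1) = s.etour) ∧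
    (E[f - 1]? = some x) ∧ (E[l + 1]? = some x) ∧
    (E.take (f - 1) ++ E.drop (l + 2) = (t.remove y).etour) := by
  obtain ⟨hxy, A, B, hE, hA, hB, hR⟩ := RTree.key hc hnd hy
  obtain ⟨y0, cs0⟩ := s
  have hy0 : y = y0 := hy.symm
  subst hy0
  intro E f l
  rw [RTree.etour_node] at hE
  set M := cs0.flatMap (fun c => [y] ++ c.etour ++ [y]) with hM
  have hEv : E = t.etour := rfl
  have hfv : f = List.idxOf y E := rfl
  have hlv : l = E.length - 1 - List.idxOf y E.reverse := rfl
  have hynA : y ∉ A ++ [x] := by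
    intro h
    rcases List.mem_append.1 h with h | h
    · exact hA h
    · exact hxy (List.mem_singleton.1 h).symm
  have hynB : y ∉ B.reverse ++ [x] := by
    intro h
    rcases List.mem_append.1 h with h | h
    · exact hB (List.mem_reverse.1 h)
    · exact hxy (List.mem_singleton.1 h).symm
  have hEeq' : t.etour = (A ++ [x]) ++ y :: (M ++ [y] ++ [x] ++ B) := by
    rw [hE]; simp
  have hE2 : t.etour = A ++ x :: ([y] ++ M ++ [y] ++ [x] ++ B) := by
    rw [hE]; simp
  have hE3 : t.etour = (A ++ [x] ++ [y] ++ M ++ [y]) ++ x :: B := by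
    rw [hE]; simp
  have hE4 : t.etour = (A ++ [x] ++ [y] ++ M ++ [y] ++ [x]) ++ B := by
    rw [hE]; simp
  have hrev : t.etour.reverse = (B.reverse ++ [x]) ++ y :: (M.reverse ++ [y] ++ [x] ++ A.reverse) := by
    rw [hE]; simp
  have hLen : t.etour.length = A.length + M.length + B.length + 4 := by
    rw [hE]
    simp only [List.length_append, List.length_cons, List.length_singleton, List.length_nil]
    omega
  have hf : f = A.length + 1 := by
    rw [hfv, hEv, hEeq', indexOf_append_cons' _ _ hynA]
    simp
  have hfl' : List.idxOf y t.etour.reverse = B.length + 1 := by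
    rw [hrev, indexOf_append_cons' _ _ hynB]
    simp
  have hl : l = A.length + M.length + 2 := by
    rw [hlv, hEv, hfl', hLen]
    omega
  refine ⟨?_, ?_, ?_, ?_⟩
  · rw [hf, hl, hEv]
    have harith : A.length + M.length + 2 - (A.length + 1) + 1 = M.length + 2 := by omega
    rw [harith, hEeq', List.drop_left'
      (by simp : (A ++ [x]).length = A.length + 1)]
    have hsplit : y :: (M ++ [y] ++ [x] ++ B) = (y :: (M ++ [y])) ++ ([x] ++ B) := by simp
    rw [hsplit, List.take_left'
      (by simp only [List.length_cons, List.length_append, List.length_singleton,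
          List.length_nil] :
        (y :: (M ++ [y])).length = M.length + 2)]
    rw [RTree.etour_node, ← hM]
    simp
  · rw [hf, hEv]
    have e1 : A.length + 1 - 1 = A.length := by omega
    rw [e1, hE2, List.getElem?_append_right (le_refl _)]
    simp
  · rw [hl, hEv, hE3]
    have hple : (A ++ [x] ++ [y] ++ M ++ [y]).length ≤ A.length + M.length + 2 + 1 := by
      simp only [List.length_append, List.length_cons, List.length_singleton, List.length_nil]
      omega
    rw [List.getElem?_append_right hple]
    have e2 : A.length + M.length + 2 + 1 - (A ++ [x] ++ [y] ++ M ++ [y]).length = 0 := by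
      simp only [List.length_append, List.length_cons, List.length_singleton, List.length_nil]
      omega
    rw [e2]
    simp
  · have ht : t.etour.take A.length = A := by
      rw [hE2]; exact List.take_left' rfl
    have hd : t.etour.drop (A.length + M.length + 4) = B := by
      rw [hE4]
      exact List.drop_left' (by
        simp only [List.length_append, List.length_cons, List.length_singleton, List.length_nil]
        omega)
    rw [hf, hl, hEv]
    have e1 : A.length + 1 - 1 = A.length := by omega
    have e2 : A.length + M.length + 2 + 2 = A.length + M.length + 4 := by omega
    rw [e1, e2, ht, hd, hR]
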